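/- Let p be an odd prime, n ≥ 2, and k ≥ 1 an integer. Then every element x of the kernel of the reduction homomorphism SL_n(ℤ/p^kℤ) → SL_n(ℤ/pℤ) satisfies x^{p^{k-1}} = 1, i.e., the exponent of this kernel divides p^{k-1}. -/

import Mathlib

theorem key_step (p : ℕ) (R : Type*) [CommRing R] (n : Type*) [Fintype n] [DecidableEq n]
    (i : ℕ) (hi : 1 ≤ i) (C : Matrix n n R) :
    ∃ D : Matrix n n R, (1 + (p:R)^i • C)^p = 1 + (p:R)^(i+1) • D := by
  have hnat : ∀ m ∈ Finset.range p, ∃ t : ℕ,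
      p ^ (i * (m+1)) * Nat.choose p (m+1) = p ^ (i+1) * t := by
    intro m hm
    rcases Nat.eq_zero_or_pos m with rfl | hm1
    · refine ⟨1, ?_⟩
      rw [Nat.choose_one_right, pow_succ]; ring
    · have h : i + 1 ≤ i * (m+1) := by nlinarith
      obtain ⟨s, hs⟩ := pow_dvd_pow p h
      exact ⟨s * Nat.choose p (m+1), by rw [hs]; ring⟩
  choose t ht using hnat
  set b : Matrix n n R := (p:R)^i • C with hb
  have hcomm : Commute b (1 : Matrix n n R) := Commute.one_right b
  have hpow := hcomm.add_pow p
  -- (b + 1)^p = ∑ m in range (p+1), b^m * 1^(p-m) * choose p m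
  refine ⟨∑ m ∈ Finset.attach (Finset.range p),
      ((t m.1 m.2 : R)) • C ^ (m.1 + 1), ?_⟩
  have h1 : (1 + b) ^ p = ∑ m ∈ Finset.range (p+1), b ^ m * (Nat.choose p m : Matrix n n R) := by
    rw [add_comm, hpow]
    refine Finset.sum_congr rfl fun m hm => ?_
    simp
  rw [h1, Finset.sum_range_succ']
  simp only [pow_zero, one_mul, Nat.choose_zero_right, Nat.cast_one]
  rw [add_comm]
  congr 1
  rw [Finset.smul_sum, ← Finset.sum_attach (Finset.range p)]
  refine Finset.sum_congr rfl fun m _ => ?_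
  have hbm : b ^ (m.1 + 1) = ((p:R)^i) ^ (m.1+1) • C ^ (m.1+1) := smul_pow _ _ _
  rw [hbm]
  have : (Nat.choose p (m.1+1) : Matrix n n R) = ((Nat.choose p (m.1+1) : R)) • (1 : Matrix n n R) := by
    rw [Nat.cast_smul_eq_nsmul, nsmul_eq_mul, mul_one]
  rw [this, smul_mul_assoc, mul_smul_comm, mul_one]
  simp only [smul_smul]
  congr 1
  rw [← pow_mul]
  have := ht m.1 m.2
  calc (p:R) ^ (i * (m.1+1)) * (Nat.choose p (m.1+1) : R)
      = ((p ^ (i * (m.1+1)) * Nat.choose p (m.1+1) : ℕ) : R) := by push_cast; ring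
    _ = ((p ^ (i+1) * t m.1 m.2 : ℕ) : R) := by rw [this]
    _ = (p:R) ^ (i+1) * (t m.1 m.2 : R) := by push_cast; ring

/-- For `p` an odd prime, every element `x` of the kernel of the reduction homomorphism
`SL_n(ℤ/p^kℤ) → SL_n(ℤ/pℤ)` satisfies `x^{p^{k-1}} = 1`. -/
theorem congruence_kernel_exponent (p : ℕ) (hp : p.Prime) (hodd : Odd p)
    (n : ℕ) (hn : 2 ≤ n) (k : ℕ) (hk : 1 ≤ k) :
    ∀ x : Matrix.SpecialLinearGroup (Fin n) (ZMod (p ^ k)),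
      x ∈ MonoidHom.ker
        (Matrix.SpecialLinearGroup.map (n := Fin n)
          (ZMod.castHom (dvd_pow_self p (Nat.one_le_iff_ne_zero.mp hk)) (ZMod p))) →
      x ^ (p ^ (k - 1)) = 1 := by
  intro x hx
  have hpk : NeZero (p ^ k) := ⟨pow_ne_zero k hp.ne_zero⟩
  set R := ZMod (p ^ k)
  set f := ZMod.castHom (dvd_pow_self p (Nat.one_le_iff_ne_zero.mp hk)) (ZMod p)
  -- divisibility lemma
  have hdiv : ∀ a : R, f a = 0 → ∃ b : R, a = (p : R) * b := by
    intro a ha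
    have h0 : (ZMod.cast a : ZMod p) = 0 := by
      have := ha; rwa [ZMod.castHom_apply] at this
    have h1 : ((a.val : ℕ) : ZMod p) = 0 := by rw [ZMod.natCast_val]; exact h0
    have h2 : p ∣ a.val := (ZMod.natCast_eq_zero_iff _ _).mp h1
    obtain ⟨c, hc⟩ := h2
    refine ⟨(c : R), ?_⟩
    have : ((a.val : ℕ) : R) = a := by rw [ZMod.natCast_val, ZMod.cast_id]
    rw [← this, hc]; exact Nat.cast_mul p c
  -- base case: x = 1 + p • C
  have hker : (x : Matrix (Fin n) (Fin n) R).map f = 1 := by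
    have h := MonoidHom.mem_ker.mp hx
    have h2 := congrArg (fun y : Matrix.SpecialLinearGroup (Fin n) (ZMod p) =>
      (y : Matrix (Fin n) (Fin n) (ZMod p))) h
    exact h2
  have hbase : ∃ C : Matrix (Fin n) (Fin n) R,
      (x : Matrix (Fin n) (Fin n) R) = 1 + (p : R) ^ 1 • C := by
    have hentry : ∀ i j, ∃ b : R,
        (x : Matrix (Fin n) (Fin n) R) i j - (1 : Matrix (Fin n) (Fin n) R) i j
          = (p : R) * b := by
      intro i j
      apply hdiv
      have h1 : f ((x : Matrix (Fin n) (Fin n) R) i j) = (1 : Matrix (Fin n) (Fin n) ((ZMod p))) i j := by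
        rw [← hker]; rfl
      rw [map_sub, h1]
      have : f ((1 : Matrix (Fin n) (Fin n) R) i j) = (1 : Matrix (Fin n) (Fin n) (ZMod p)) i j := by
        by_cases hij : i = j <;> simp [Matrix.one_apply, hij]
      rw [this, sub_self]
    choose C hC using hentry
    refine ⟨Matrix.of C, ?_⟩
    ext i j
    have := hC i j
    simp only [Matrix.add_apply, Matrix.smul_apply, Matrix.of_apply, pow_one, smul_eq_mul]
    linear_combination this
  obtain ⟨C, hC⟩ := hbase
  -- induction
  have main : ∀ j : ℕ, ∃ D : Matrix (Fin n) (Fin n) R,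
      (x : Matrix (Fin n) (Fin n) R) ^ (p ^ j) = 1 + (p : R) ^ (j + 1) • D := by
    intro j
    induction j with
    | zero => exact ⟨C, by rw [pow_zero, pow_one, hC]⟩
    | succ j ih =>
      obtain ⟨D, hD⟩ := ih
      obtain ⟨E, hE⟩ := key_step p R (Fin n) (j + 1) (Nat.le_add_left 1 j) D
      exact ⟨E, by rw [pow_succ, pow_mul, hD, hE]⟩
  obtain ⟨D, hD⟩ := main (k - 1)
  have hk1 : k - 1 + 1 = k := Nat.succ_pred_eq_of_pos hk
  rw [hk1] at hD
  have hzero : (p : R) ^ k = 0 := by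
    have : ((p ^ k : ℕ) : R) = 0 := ZMod.natCast_self _
    rwa [Nat.cast_pow] at this
  rw [hzero, zero_smul, add_zero] at hD
  ext i j
  rw [Matrix.SpecialLinearGroup.coe_pow, hD]
  rfl
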